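/- Let O_K be a complete discrete valuation ring with uniformizer π and residue field of finite cardinality, K its fraction field, and fix n ∈ ℕ with ε_n = |π^n|. For two K-subspaces U, U' ⊊ K^{d+1}, if U ∩ Λ ≡ U' ∩ Λ (mod π^n Λ) where Λ = O_K^{d+1}, then the tube neighborhoods coincide: Y_U(ε_n) = Y_{U'}(ε_n), where Y_U(ε_n) is the set of points x of rigid projective space P^d with |f(x̃)| ≤ ε_n for every polynomial f in the integral vanishing ideal of P(U) (with at least one unit coefficient) and any unimodular representative x̃ of x. -/
import Mathlib


/-!
STATEMENT 13: let `O_K` be a complete DVR with uniformizer `π` and finite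
residue field, `K` its fraction field, and `ε_n = |π^n|`.  For `K`-subspaces
`U, U' ⊊ K^{d+1}`, if `U ∩ Λ ≡ U' ∩ Λ (mod π^n Λ)` (with `Λ = O_K^{d+1}`),
then `Y_U(ε_n) = Y_{U'}(ε_n)`, where `Y_U(ε_n)` is the tube of points `x` of
rigid projective space with `|f(x̃)| ≤ ε_n` for every homogeneous `f` in the
integral vanishing ideal of `P(U)` having a unit coefficient, and any
unimodular representative `x̃` of `x`.

We model `K` as a complete nonarchimedean nontrivially normed field whose
value group is generated by `‖π‖` (so `O_K = {‖·‖ ≤ 1}` is a complete DVR with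
uniformizer `π`), with finite residue field, and `C_p`-points by a complete
algebraically closed isometric normed extension `C`.  Points of projective
space are represented by unimodular tuples; tubes are stated on unimodular
representatives (membership is representative-independent).
-/

open MvPolynomial

variable {K : Type*} [NontriviallyNormedField K]
variable {C : Type*} [NormedField C] [NormedAlgebra K C]

/-- A tuple is unimodular if all coordinates have norm `≤ 1` and some
coordinate has norm `1`. -/
def Unimodular (d : ℕ) (z : Fin (d + 1) → C) : Prop :=
  (∀ i, ‖z i‖ ≤ 1) ∧ ∃ i, ‖z i‖ = 1

/-- `f` belongs to the integral vanishing ideal of `P(U)`, is homogeneous, and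
has at least one coefficient which is a unit of `O_K`. -/
def IsIntegralVanishing (d : ℕ) (U : Submodule K (Fin (d + 1) → K))
    (f : MvPolynomial (Fin (d + 1)) K) : Prop :=
  (∀ m, ‖MvPolynomial.coeff m f‖ ≤ 1) ∧
  (∃ m, ‖MvPolynomial.coeff m f‖ = 1) ∧
  (∃ N, f.IsHomogeneous N) ∧
  (∀ u : Fin (d + 1) → K, u ∈ U → MvPolynomial.eval u f = 0)

/-- The (set of unimodular representatives of points of the) tube
`Y_U(ε)` around `P(U)`. -/
def Tube (d : ℕ) (U : Submodule K (Fin (d + 1) → K)) (ε : ℝ) :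
    Set (Fin (d + 1) → C) :=
  {z | Unimodular d z ∧ ∀ f : MvPolynomial (Fin (d + 1)) K,
    IsIntegralVanishing d U f → ‖MvPolynomial.aeval z f‖ ≤ ε}



section Helpers

set_option linter.unusedSectionVars false

variable {F : Type*} [NormedField F] [IsUltrametricDist F]

open IsUltrametricDist

theorem nsub_le_max (a b : F) : ‖a - b‖ ≤ max ‖a‖ ‖b‖ := by
  simpa [sub_eq_add_neg] using norm_add_le_max a (-b)

theorem usum {ι : Type*} {s : Finset ι} {f : ι → F} {c : ℝ} (hc : 0 ≤ c)
    (h : ∀ i ∈ s, ‖f i‖ ≤ c) : ‖∑ i ∈ s, f i‖ ≤ c :=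
  norm_sum_le_of_forall_le_of_nonneg hc h

theorem mul_le_one_norm {a b : F} (ha : ‖a‖ ≤ 1) (hb : ‖b‖ ≤ 1) : ‖a * b‖ ≤ 1 :=
  le_trans (norm_mul_le _ _) (mul_le_one₀ ha (norm_nonneg _) hb)

theorem mul_le_eps_left {a b : F} {ε : ℝ} (hε : 0 ≤ ε) (ha : ‖a‖ ≤ ε) (hb : ‖b‖ ≤ 1) :
    ‖a * b‖ ≤ ε := by
  calc ‖a * b‖ ≤ ‖a‖ * ‖b‖ := norm_mul_le _ _
  _ ≤ ε * 1 := mul_le_mul ha hb (norm_nonneg _) hε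
  _ = ε := mul_one ε

theorem mul_le_eps_right {a b : F} {ε : ℝ} (hε : 0 ≤ ε) (ha : ‖a‖ ≤ 1) (hb : ‖b‖ ≤ ε) :
    ‖a * b‖ ≤ ε := by
  rw [mul_comm]; exact mul_le_eps_left hε hb ha

theorem int_mul {σ : Type*} {p q : MvPolynomial σ F}
    (hp : ∀ m, ‖coeff m p‖ ≤ 1) (hq : ∀ m, ‖coeff m q‖ ≤ 1) :
    ∀ m, ‖coeff m (p * q)‖ ≤ 1 := by
  classical
  intro m
  rw [coeff_mul]
  exact usum zero_le_one fun x _ => mul_le_one_norm (hp _) (hq _)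

theorem int_C {σ : Type*} {c : F} (hc : ‖c‖ ≤ 1) :
    ∀ m, ‖coeff m (MvPolynomial.C c : MvPolynomial σ F)‖ ≤ 1 := by
  classical
  intro m
  rw [coeff_C]
  split <;> simp [hc]

theorem int_one {σ : Type*} : ∀ m, ‖coeff m (1 : MvPolynomial σ F)‖ ≤ 1 := by
  rw [show (1 : MvPolynomial σ F) = MvPolynomial.C 1 from (C_1).symm]
  exact int_C (by simp)

theorem int_prod {σ ι : Type*} {s : Finset ι} {p : ι → MvPolynomial σ F}
    (hp : ∀ i ∈ s, ∀ m, ‖coeff m (p i)‖ ≤ 1) :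
    ∀ m, ‖coeff m (∏ i ∈ s, p i)‖ ≤ 1 := by
  classical
  induction s using Finset.induction_on with
  | empty => simpa using int_one
  | @insert j s hj ih =>
    rw [Finset.prod_insert hj]
    exact int_mul (hp j (Finset.mem_insert_self _ _))
      (ih fun i hi => hp i (Finset.mem_insert_of_mem hi))

theorem int_pow {σ : Type*} {p : MvPolynomial σ F}
    (hp : ∀ m, ‖coeff m p‖ ≤ 1) (k : ℕ) : ∀ m, ‖coeff m (p ^ k)‖ ≤ 1 := by
  induction k with
  | zero => simpa using int_one
  | succ k ih => rw [pow_succ]; exact int_mul ih hp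

theorem pow_diff {a b : F} (ha : ‖a‖ ≤ 1) (hb : ‖b‖ ≤ 1) {ε : ℝ} (hε : 0 ≤ ε)
    (h : ‖a - b‖ ≤ ε) (k : ℕ) : ‖a ^ k - b ^ k‖ ≤ ε := by
  induction k with
  | zero => simpa using hε
  | succ k ih =>
    have key : a ^ (k+1) - b ^ (k+1) = a * (a ^ k - b ^ k) + (a - b) * b ^ k := by ring
    rw [key]
    refine le_trans (norm_add_le_max _ _) (max_le ?_ ?_)
    · exact mul_le_eps_right hε ha ih
    · exact mul_le_eps_left hε h (by rw [norm_pow]; exact pow_le_one₀ (norm_nonneg _) hb)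

theorem prod_diff {ι : Type*} {s : Finset ι} {A B : ι → F} {ε : ℝ} (hε : 0 ≤ ε)
    (hA : ∀ i, ‖A i‖ ≤ 1) (hB : ∀ i, ‖B i‖ ≤ 1) (h : ∀ i, ‖A i - B i‖ ≤ ε) :
    ‖∏ i ∈ s, A i - ∏ i ∈ s, B i‖ ≤ ε := by
  classical
  induction s using Finset.induction_on with
  | empty => simpa using hε
  | @insert j s hj ih =>
    rw [Finset.prod_insert hj, Finset.prod_insert hj]
    have key : A j * ∏ i ∈ s, A i - B j * ∏ i ∈ s, B i
        = A j * (∏ i ∈ s, A i - ∏ i ∈ s, B i) + (A j - B j) * ∏ i ∈ s, B i := by ring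
    rw [key]
    refine le_trans (norm_add_le_max _ _) (max_le ?_ ?_)
    · exact mul_le_eps_right hε (hA j) ih
    · have hP : ‖∏ i ∈ s, B i‖ ≤ 1 := by
        rw [norm_prod]
        exact Finset.prod_le_one (fun i _ => norm_nonneg _) (fun i _ => hB i)
      exact mul_le_eps_left hε (h j) hP

end Helpers

theorem exists_good_basis [IsUltrametricDist K] (π : K) (hπ0 : π ≠ 0)
    (hdisc : ∀ x : K, x ≠ 0 → ∃ m : ℤ, ‖x‖ = ‖π‖ ^ m)
    (D : ℕ) (U : Submodule K (Fin D → K)) :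
    ∃ (r : ℕ) (v : Fin r → (Fin D → K)) (φ : Fin r → ((Fin D → K) →ₗ[K] K)),
      (∀ j, v j ∈ U) ∧ (∀ j i, ‖v j i‖ ≤ 1) ∧
      (∀ j (x : Fin D → K), (∀ i, ‖x i‖ ≤ 1) → ‖φ j x‖ ≤ 1) ∧
      (∀ u ∈ U, u = ∑ j, φ j u • v j) := by
  have hπpos : (0:ℝ) < ‖π‖ := norm_pos_iff.mpr hπ0
  suffices H : ∀ (k : ℕ) (U : Submodule K (Fin D → K)), Module.finrank K U ≤ k →
      ∃ (r : ℕ) (v : Fin r → (Fin D → K)) (φ : Fin r → ((Fin D → K) →ₗ[K] K)),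
      (∀ j, v j ∈ U) ∧ (∀ j i, ‖v j i‖ ≤ 1) ∧
      (∀ j (x : Fin D → K), (∀ i, ‖x i‖ ≤ 1) → ‖φ j x‖ ≤ 1) ∧
      (∀ u ∈ U, u = ∑ j, φ j u • v j) from H _ U le_rfl
  intro k
  induction k with
  | zero =>
    intro U hU
    have hbot : U = ⊥ := by
      rw [← Submodule.finrank_eq_zero (R := K) (M := Fin D → K)]
      omega
    refine ⟨0, Fin.elim0, Fin.elim0, fun j => j.elim0, fun j => j.elim0, fun j => j.elim0, ?_⟩
    intro u hu
    rw [hbot, Submodule.mem_bot] at hu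
    simp [hu]
  | succ k ih =>
    intro U hU
    by_cases hbot : U = ⊥
    · refine ⟨0, Fin.elim0, Fin.elim0, fun j => j.elim0, fun j => j.elim0, fun j => j.elim0, ?_⟩
      intro u hu
      rw [hbot, Submodule.mem_bot] at hu
      simp [hu]
    · obtain ⟨v₀, hv₀U, hv₀⟩ := Submodule.exists_mem_ne_zero_of_ne_bot hbot
      obtain ⟨i₁, hi₁⟩ : ∃ i, v₀ i ≠ 0 := by
        by_contra h
        push_neg at h
        exact hv₀ (funext h)
      obtain ⟨i₀, -, hi₀⟩ := Finset.exists_max_image Finset.univ (fun i => ‖v₀ i‖)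
        ⟨i₁, Finset.mem_univ i₁⟩
      have hvi₀ : v₀ i₀ ≠ 0 := by
        intro h
        have := hi₀ i₁ (Finset.mem_univ i₁)
        rw [h] at this
        simp at this
        exact hi₁ this
      obtain ⟨mz, hmz⟩ := hdisc (v₀ i₀) hvi₀
      set v₁ : Fin D → K := (π ^ (-mz) : K) • v₀ with hv₁def
      have hv₁U : v₁ ∈ U := U.smul_mem _ hv₀U
      have hv₁norm : ∀ i, ‖v₁ i‖ = ‖π‖ ^ (-mz) * ‖v₀ i‖ := by
        intro i
        simp [hv₁def, norm_zpow]
      have hv₁i₀ : ‖v₁ i₀‖ = 1 := by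
        rw [hv₁norm, hmz, ← zpow_add₀ (ne_of_gt hπpos)]
        simp
      have hv₁int : ∀ i, ‖v₁ i‖ ≤ 1 := by
        intro i
        rw [hv₁norm]
        calc ‖π‖ ^ (-mz) * ‖v₀ i‖ ≤ ‖π‖ ^ (-mz) * ‖v₀ i₀‖ := by
              exact mul_le_mul_of_nonneg_left (hi₀ i (Finset.mem_univ i))
                (le_of_lt (zpow_pos hπpos _))
        _ = 1 := by rw [hmz, ← zpow_add₀ (ne_of_gt hπpos)]; simp
      have hv₁i₀ne : v₁ i₀ ≠ 0 := by
        intro h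
        rw [h] at hv₁i₀
        simp at hv₁i₀
      set φ₀ : (Fin D → K) →ₗ[K] K := (v₁ i₀)⁻¹ • (LinearMap.proj i₀) with hφ₀def
      have hφ₀v₁ : φ₀ v₁ = 1 := by
        simp [hφ₀def, inv_mul_cancel₀ hv₁i₀ne]
      have hφ₀int : ∀ (x : Fin D → K), (∀ i, ‖x i‖ ≤ 1) → ‖φ₀ x‖ ≤ 1 := by
        intro x hx
        have : φ₀ x = (v₁ i₀)⁻¹ * x i₀ := rfl
        rw [this, norm_mul, norm_inv, hv₁i₀]
        simpa using hx i₀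
      set U₁ := U ⊓ LinearMap.ker φ₀ with hU₁def
      have hlt : U₁ < U := by
        refine lt_of_le_of_ne inf_le_left ?_
        intro h
        have : v₁ ∈ U₁ := h ▸ hv₁U
        have : φ₀ v₁ = 0 := (Submodule.mem_inf.mp this).2
        rw [hφ₀v₁] at this
        exact one_ne_zero this
      have hrk : Module.finrank K U₁ ≤ k := by
        have := Submodule.finrank_lt_finrank_of_lt hlt
        omega
      obtain ⟨r, v', φ', hv'U, hv'int, hφ'int, hdec⟩ := ih U₁ hrk
      refine ⟨r + 1, Fin.cons v₁ v',
        Fin.cons φ₀ (fun j => φ' j - (φ' j v₁) • φ₀), ?_, ?_, ?_, ?_⟩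
      · intro j
        refine Fin.cases ?_ ?_ j
        · exact hv₁U
        · intro j'
          simpa using (inf_le_left : U₁ ≤ U) (hv'U j')
      · intro j
        refine Fin.cases ?_ ?_ j
        · simpa using hv₁int
        · intro j'
          simpa using hv'int j'
      · intro j
        refine Fin.cases ?_ ?_ j
        · simpa using hφ₀int
        · intro j' x hx
          simp only [Fin.cons_succ, LinearMap.sub_apply, LinearMap.smul_apply, smul_eq_mul]
          refine le_trans (nsub_le_max _ _) (max_le (hφ'int j' x hx) ?_)
          exact mul_le_one_norm (hφ'int j' v₁ hv₁int) (hφ₀int x hx)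
      · intro u hu
        have hcu : u - (φ₀ u) • v₁ ∈ U₁ := by
          rw [hU₁def, Submodule.mem_inf]
          constructor
          · exact Submodule.sub_mem _ hu (U.smul_mem _ hv₁U)
          · rw [LinearMap.mem_ker, map_sub, map_smul, hφ₀v₁, smul_eq_mul, mul_one, sub_self]
        have hrec := hdec _ hcu
        rw [Fin.sum_univ_succ]
        have : ∀ j, (φ' j - (φ' j v₁) • φ₀) u = φ' j (u - (φ₀ u) • v₁) := by
          intro j
          simp [map_sub, map_smul, smul_eq_mul]
          ring
        simp only [Fin.cons_succ, Fin.cons_zero, this]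
        rw [← hrec]
        abel

theorem eval_diff [IsUltrametricDist C]
    (hiso : ∀ x : K, ‖algebraMap K C x‖ = ‖x‖) {d : ℕ}
    (f : MvPolynomial (Fin (d + 1)) K) (hf : ∀ m, ‖coeff m f‖ ≤ 1)
    {z y : Fin (d + 1) → C} (hz : ∀ i, ‖z i‖ ≤ 1) (hy : ∀ i, ‖y i‖ ≤ 1)
    {ε : ℝ} (hε : 0 ≤ ε) (hclose : ∀ i, ‖z i - y i‖ ≤ ε) :
    ‖aeval z f - aeval y f‖ ≤ ε := by
  rw [aeval_def, aeval_def, eval₂_eq, eval₂_eq, ← Finset.sum_sub_distrib]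
  refine usum hε fun m _ => ?_
  rw [← mul_sub]
  refine mul_le_eps_right hε (by rw [hiso]; exact hf m) ?_
  refine prod_diff hε (fun i => ?_) (fun i => ?_) (fun i => ?_)
  · rw [norm_pow]; exact pow_le_one₀ (norm_nonneg _) (hz i)
  · rw [norm_pow]; exact pow_le_one₀ (norm_nonneg _) (hy i)
  · exact pow_diff (hz i) (hy i) hε (hclose i) (m i)

theorem tube_subset [IsUltrametricDist K] [IsUltrametricDist C]
    (hiso : ∀ x : K, ‖algebraMap K C x‖ = ‖x‖)
    (π : K) (hπ0 : π ≠ 0) (hπ1 : ‖π‖ < 1)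
    (hdisc : ∀ x : K, x ≠ 0 → ∃ m : ℤ, ‖x‖ = ‖π‖ ^ m)
    (d n : ℕ) (U U' : Submodule K (Fin (d + 1) → K))
    (hcong₁ : ∀ v ∈ U, (∀ i, ‖v i‖ ≤ 1) →
      ∃ w ∈ U', (∀ i, ‖w i‖ ≤ 1) ∧ ∀ i, ‖v i - w i‖ ≤ ‖π‖ ^ n) :
    Tube (C := C) d U (‖π‖ ^ n) ⊆ Tube (C := C) d U' (‖π‖ ^ n) := by
  classical
  set ε : ℝ := ‖π‖ ^ n with hεdef
  have hε0 : 0 ≤ ε := pow_nonneg (norm_nonneg π) n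
  have hε1 : ε ≤ 1 := pow_le_one₀ (norm_nonneg π) hπ1.le
  rintro z ⟨hzu, hztube⟩
  refine ⟨hzu, ?_⟩
  have hzint : ∀ i, ‖z i‖ ≤ 1 := hzu.1
  rintro f ⟨hf1, hf2, ⟨N, hfh⟩, hfv⟩
  obtain ⟨r, v, φ, hvU, hvint, hφint, hdec⟩ := exists_good_basis π hπ0 hdisc (d + 1) U
  choose w hwU' hwint hwclose using fun j => hcong₁ (v j) (hvU j) (hvint j)
  set e : Fin (d + 1) → (Fin (d + 1) → K) := fun k => Pi.single k 1 with hedef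
  have he_int : ∀ k i, ‖e k i‖ ≤ 1 := by
    intro k i
    simp only [hedef, Pi.single_apply]
    split <;> simp
  have hexp : ∀ (ψ : (Fin (d + 1) → K) →ₗ[K] K) (x : Fin (d + 1) → K),
      ψ x = ∑ k, x k * ψ (e k) := by
    intro ψ x
    have hx : x = ∑ k, x k • e k := by
      ext i
      simp [hedef, Finset.sum_apply, Pi.single_apply, mul_ite, mul_one, mul_zero,
        Finset.sum_ite_eq]
    calc ψ x = ψ (∑ k, x k • e k) := by rw [← hx]
    _ = ∑ k, x k * ψ (e k) := by rw [map_sum]; simp [map_smul, smul_eq_mul]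
  set a : Fin (d + 1) → Fin (d + 1) → K :=
    fun i k => (if i = k then 1 else 0) + ∑ j, φ j (e k) * (w j i - v j i) with hadef
  have ha_close : ∀ i k, ‖a i k - (if i = k then 1 else 0)‖ ≤ ε := by
    intro i k
    simp only [hadef, add_sub_cancel_left]
    refine usum hε0 fun j _ => mul_le_eps_right hε0 (hφint j _ (he_int k)) ?_
    rw [norm_sub_rev]
    exact hwclose j i
  have ha_int : ∀ i k, ‖a i k‖ ≤ 1 := by
    intro i k
    have h1 : a i k = (a i k - (if i = k then 1 else 0)) + (if i = k then 1 else 0) := by ring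
    rw [h1]
    refine le_trans (IsUltrametricDist.norm_add_le_max _ _) (max_le (le_trans (ha_close i k) hε1) ?_)
    split <;> simp
  have hAx : ∀ (x : Fin (d + 1) → K) (i : Fin (d + 1)),
      ∑ k, a i k * x k = x i + ∑ j, φ j x * (w j i - v j i) := by
    intro x i
    have h2 : ∀ j, ∑ k, φ j (e k) * (w j i - v j i) * x k = φ j x * (w j i - v j i) := by
      intro j
      rw [hexp (φ j) x, Finset.sum_mul]
      exact Finset.sum_congr rfl fun k _ => by ring
    calc ∑ k, a i k * x k
        = ∑ k, ((if i = k then 1 else 0) * x k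
            + ∑ j, φ j (e k) * (w j i - v j i) * x k) := by
          refine Finset.sum_congr rfl fun k _ => ?_
          rw [hadef]
          rw [add_mul, Finset.sum_mul]
    _ = (∑ k, (if i = k then 1 else 0) * x k)
          + ∑ k, ∑ j, φ j (e k) * (w j i - v j i) * x k := Finset.sum_add_distrib
    _ = x i + ∑ j, ∑ k, φ j (e k) * (w j i - v j i) * x k := by
          rw [Finset.sum_comm]
          congr 1
          simp [ite_mul, one_mul, zero_mul, Finset.sum_ite_eq]
    _ = x i + ∑ j, φ j x * (w j i - v j i) := by
          congr 1
          exact Finset.sum_congr rfl fun j _ => h2 j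
  have hAU : ∀ u ∈ U, (fun i => ∑ k, a i k * u k) ∈ U' := by
    intro u hu
    have hrep : (fun i => ∑ k, a i k * u k) = ∑ j, φ j u • w j := by
      funext i
      rw [hAx u i]
      have hui : u i = ∑ j, φ j u * v j i := by
        conv_lhs => rw [hdec u hu]
        simp [Finset.sum_apply]
      rw [hui, Finset.sum_apply]
      rw [← Finset.sum_add_distrib]
      exact Finset.sum_congr rfl fun j _ => by simp; ring
    rw [hrep]
    exact Submodule.sum_mem _ fun j _ => Submodule.smul_mem _ _ (hwU' j)
  set L : Fin (d + 1) → MvPolynomial (Fin (d + 1)) K :=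
    fun i => ∑ k, MvPolynomial.C (a i k) * X k with hLdef
  have hLhom : ∀ i, (L i).IsHomogeneous 1 := fun i =>
    IsHomogeneous.sum _ _ _ fun k _ => isHomogeneous_C_mul_X _ _
  have hLint : ∀ i m, ‖coeff m (L i)‖ ≤ 1 := by
    intro i m
    rw [hLdef]
    rw [coeff_sum]
    refine usum zero_le_one fun k _ => ?_
    rw [coeff_C_mul]
    refine mul_le_one_norm (ha_int i k) ?_
    rw [coeff_X']
    split <;> simp
  have hLevalK : ∀ (x : Fin (d + 1) → K) (i), eval x (L i) = ∑ k, a i k * x k := by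
    intro x i
    simp [hLdef]
  have hLevalC : ∀ (i : Fin (d + 1)),
      aeval z (L i) = ∑ k, algebraMap K C (a i k) * z k := by
    intro i
    simp [hLdef]
  set g : MvPolynomial (Fin (d + 1)) K := bind₁ L f with hgdef
  have hgvanish : ∀ u ∈ U, eval u g = 0 := by
    intro u hu
    have h1 : eval u g = eval (fun i => eval u (L i)) f :=
      eval₂Hom_bind₁ (RingHom.id K) u L f
    rw [h1]
    have h2 : (fun i => eval u (L i)) = (fun i => ∑ k, a i k * u k) := by
      funext i; exact hLevalK u i
    rw [h2]
    exact hfv _ (hAU u hu)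
  have hghom : g.IsHomogeneous N := by
    have h := hfh.aeval L hLhom
    rw [one_mul] at h
    exact h
  have hgint : ∀ m, ‖coeff m g‖ ≤ 1 := by
    have hgrep : g = ∑ m ∈ f.support, MvPolynomial.C (coeff m f)
        * ∏ i ∈ m.support, (L i) ^ m i := by
      rw [hgdef, show bind₁ L f = aeval L f from rfl, aeval_def, eval₂_eq, algebraMap_eq]
    intro m
    rw [hgrep, coeff_sum]
    refine usum zero_le_one fun m' _ => ?_
    refine int_mul (int_C (hf1 m')) ?_ m
    exact int_prod fun i _ => int_pow (hLint i) (m' i)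
  set y : Fin (d + 1) → C := fun i => aeval z (L i) with hydef
  have hy_int : ∀ i, ‖y i‖ ≤ 1 := by
    intro i
    have hyi : y i = ∑ k, algebraMap K C (a i k) * z k := hLevalC i
    rw [hyi]
    refine usum zero_le_one fun k _ => ?_
    exact mul_le_one_norm (by rw [hiso]; exact ha_int i k) (hzint k)
  have hy_close : ∀ i, ‖z i - y i‖ ≤ ε := by
    intro i
    have hzi : z i = ∑ k, algebraMap K C (if i = k then 1 else 0) * z k := by
      simp [apply_ite (algebraMap K C), ite_mul, one_mul, zero_mul, Finset.sum_ite_eq]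
    have hyi : y i = ∑ k, algebraMap K C (a i k) * z k := hLevalC i
    rw [hyi, hzi, ← Finset.sum_sub_distrib]
    refine usum hε0 fun k _ => ?_
    rw [← sub_mul, ← map_sub]
    refine mul_le_eps_left hε0 ?_ (hzint k)
    rw [hiso, norm_sub_rev]
    exact ha_close i k
  have hyg : aeval z g = aeval y f := by
    rw [hgdef, aeval_bind₁]
  have hgz : ‖aeval z g‖ ≤ ε := by
    by_cases hg0 : g = 0
    · rw [hg0]; simpa using hε0
    · obtain ⟨m₀, hm₀s, hm₀⟩ := Finset.exists_max_image g.support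
        (fun m => ‖coeff m g‖) (support_nonempty.mpr hg0)
      set c : K := coeff m₀ g with hcdef
      have hc0 : c ≠ 0 := mem_support_iff.mp hm₀s
      have hcmax : ∀ m, ‖coeff m g‖ ≤ ‖c‖ := by
        intro m
        by_cases hm : m ∈ g.support
        · exact hm₀ m hm
        · rw [notMem_support_iff.mp hm]
          simp [norm_nonneg]
      have hc1 : ‖c‖ ≤ 1 := hgint m₀
      set g' : MvPolynomial (Fin (d + 1)) K := MvPolynomial.C c⁻¹ * g with hg'def
      have hgg' : g = MvPolynomial.C c * g' := by
        rw [hg'def, ← mul_assoc, ← C_mul, mul_inv_cancel₀ hc0, C_1, one_mul]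
      have hg'IV : IsIntegralVanishing d U g' := by
        refine ⟨?_, ⟨m₀, ?_⟩, ⟨N, ?_⟩, ?_⟩
        · intro m
          rw [hg'def, coeff_C_mul, norm_mul, norm_inv]
          rw [inv_mul_le_iff₀ (norm_pos_iff.mpr hc0), mul_one]
          exact hcmax m
        · rw [hg'def, coeff_C_mul, ← hcdef, inv_mul_cancel₀ hc0]
          simp
        · rw [hg'def]
          have := (isHomogeneous_C _ c⁻¹).mul hghom
          simpa using this
        · intro u hu
          rw [hg'def, map_mul, hgvanish u hu, mul_zero]
      have h1 := hztube g' hg'IV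
      rw [hgg', map_mul, aeval_C, norm_mul, hiso]
      calc ‖c‖ * ‖aeval z g'‖ ≤ 1 * ε :=
        mul_le_mul hc1 h1 (norm_nonneg _) zero_le_one
      _ = ε := one_mul ε
  have hdiff : ‖aeval z f - aeval y f‖ ≤ ε :=
    eval_diff hiso f hf1 hzint hy_int hε0 hy_close
  calc ‖aeval z f‖ = ‖(aeval z f - aeval y f) + aeval y f‖ := by ring_nf
  _ ≤ max ‖aeval z f - aeval y f‖ ‖aeval y f‖ := IsUltrametricDist.norm_add_le_max _ _
  _ ≤ ε := max_le hdiff (by rw [← hyg]; exact hgz)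


theorem stmt13 [CompleteSpace K] [IsUltrametricDist K]
    [CompleteSpace C] [IsUltrametricDist C] [IsAlgClosed C]
    (hiso : ∀ x : K, ‖algebraMap K C x‖ = ‖x‖)
    (π : K) (hπ0 : π ≠ 0) (hπ1 : ‖π‖ < 1)
    (hdisc : ∀ x : K, x ≠ 0 → ∃ m : ℤ, ‖x‖ = ‖π‖ ^ m)
    -- finite residue field of `O_K`
    (hfin : ∃ S : Finset K, ∀ x : K, ‖x‖ ≤ 1 → ∃ s ∈ S, ‖x - s‖ < 1)
    (d n : ℕ)
    (U U' : Submodule K (Fin (d + 1) → K))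
    (hU₁ : U ≠ ⊥) (hU₂ : U ≠ ⊤) (hU'₁ : U' ≠ ⊥) (hU'₂ : U' ≠ ⊤)
    -- `U ∩ Λ ≡ U' ∩ Λ (mod π^n Λ)` :
    (hcong₁ : ∀ v ∈ U, (∀ i, ‖v i‖ ≤ 1) →
      ∃ w ∈ U', (∀ i, ‖w i‖ ≤ 1) ∧ ∀ i, ‖v i - w i‖ ≤ ‖π‖ ^ n)
    (hcong₂ : ∀ w ∈ U', (∀ i, ‖w i‖ ≤ 1) →
      ∃ v ∈ U, (∀ i, ‖v i‖ ≤ 1) ∧ ∀ i, ‖w i - v i‖ ≤ ‖π‖ ^ n) :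
    Tube (C := C) d U (‖π‖ ^ n) = Tube (C := C) d U' (‖π‖ ^ n) := by
  refine Set.Subset.antisymm ?_ ?_
  · exact tube_subset hiso π hπ0 hπ1 hdisc d n U U' hcong₁
  · exact tube_subset hiso π hπ0 hπ1 hdisc d n U' U hcong₂
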